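/- Let P be a preorder with a coded name B for a real, let Y ⊆ ℝ, and let (D_n)_{n∈ℕ} be dense subsets of P (for every p ∈ P and every n there is d ∈ D_n with d ≤ p). Suppose Eve has a winning strategy in the game G(Y). Let Z ⊆ ℝ be the set of all reals of the form val(g) where g is the filter generated by some descending ω-chain in P such that g evaluates the name B and g ∩ D_n ≠ ∅ for every n. Then Y ∩ Z ∉ I_P. -/

import Mathlib

/-- Baire space. -/
abbrev BaireR : Type := ℕ → ℕ

section Game

variable {P : Type*} [Preorder P]

/-- A coded name for a real on the preorder `P`: a family `B n m` of sets of conditions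
such that conditions deciding different values at the same coordinate are incompatible. -/
def CodedName (B : ℕ → ℕ → Set P) : Prop :=
  ∀ n m m', m ≠ m' → ∀ p ∈ B n m, ∀ p' ∈ B n m', ¬ ∃ q, q ≤ p ∧ q ≤ p'

/-- The filter generated by a descending sequence of conditions. -/
def genFilter (p : ℕ → P) : Set P := {q | ∃ i, p i ≤ q}

/-- A strategy for Adam: given the list of earlier moves and the last move played,
it produces Adam's next move.  It must be a legal move (below everything played so far)
at every descending position where it is Adam's turn, i.e. positions of odd length
`l ++ [q]` (so `l` has even length). -/
def IsAdamStrategy (σ : List P → P → P) : Prop :=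
  ∀ (l : List P) (q : P), (l ++ [q]).Chain' (fun a b => b ≤ a) → l.length % 2 = 0 →
    σ l q ≤ q ∧ ∀ r ∈ l, σ l q ≤ r

/-- A strategy for Eve: a function assigning to each position at which it is Eve's turn
(descending positions of even length, including the empty one) a condition below all
conditions played so far. -/
def IsEveStrategy (τ : List P → P) : Prop :=
  ∀ l : List P, l.Chain' (fun a b => b ≤ a) → l.length % 2 = 0 →
    ∀ r ∈ l, τ l ≤ r

/-- An infinite run `p 0 ≥ p 1 ≥ ⋯` is played according to Adam's strategy `σ`
if each odd-indexed move is produced by `σ` from the preceding position. -/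
def FollowsAdam (σ : List P → P → P) (p : ℕ → P) : Prop :=
  ∀ k, p (2 * k + 1) = σ (List.ofFn fun i : Fin (2 * k) => p i) (p (2 * k))

/-- An infinite run is played according to Eve's strategy `τ` if each even-indexed move
is produced by `τ` from the preceding position. -/
def FollowsEve (τ : List P → P) (p : ℕ → P) : Prop :=
  ∀ k, p (2 * k) = τ (List.ofFn fun i : Fin (2 * k) => p i)

/-- Eve wins the run `p` of the game `G(A)` if the generated filter evaluates the
name `B` and the valuation belongs to `A`. -/
def EveWinsRun (B : ℕ → ℕ → Set P) (A : Set BaireR) (p : ℕ → P) : Prop :=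
  ∃ x : BaireR, (∀ n, (genFilter p ∩ B n (x n)).Nonempty) ∧ x ∈ A

/-- Adam has a winning strategy in the game `G(A)`;
equivalently, `A` belongs to the collection `I_P`. -/
def AdamHasWinning (B : ℕ → ℕ → Set P) (A : Set BaireR) : Prop :=
  ∃ σ : List P → P → P, IsAdamStrategy σ ∧
    ∀ p : ℕ → P, Antitone p → FollowsAdam σ p → ¬ EveWinsRun B A p

/-- Eve has a winning strategy in the game `G(A)`. -/
def EveHasWinning (B : ℕ → ℕ → Set P) (A : Set BaireR) : Prop :=
  ∃ τ : List P → P, IsEveStrategy τ ∧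
    ∀ p : ℕ → P, Antitone p → FollowsEve τ p → EveWinsRun B A p

end Game

section Aux
variable {P : Type*} [Preorder P] (σ : List P → P → P) (τ : List P → P)
  (D : ℕ → Set P) (hD : ∀ n, ∀ p : P, ∃ d ∈ D n, d ≤ p)

noncomputable def auxStep (l : List (P × P)) : P × P :=
  if l.length % 2 = 0 then
    (τ (l.map Prod.snd), τ (l.map Prod.snd))
  else
    let a := σ (l.map Prod.fst).dropLast ((l.map Prod.fst).getLastD (τ []))
    (a, (hD ((l.length - 1) / 2) a).choose)

noncomputable def auxHist : ℕ → List (P × P)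
  | 0 => []
  | n + 1 => auxHist n ++ [auxStep σ τ D hD (auxHist n)]

noncomputable def auxR (n : ℕ) : P := (auxStep σ τ D hD (auxHist σ τ D hD n)).1
noncomputable def auxS (n : ℕ) : P := (auxStep σ τ D hD (auxHist σ τ D hD n)).2

lemma auxHist_eq (n : ℕ) : auxHist σ τ D hD n
    = List.ofFn (fun i : Fin n => (auxR σ τ D hD i, auxS σ τ D hD i)) := by
  induction n with
  | zero => simp [auxHist]
  | succ n ih =>
    show auxHist σ τ D hD n ++ [(auxR σ τ D hD n, auxS σ τ D hD n)] = _
    rw [ih, List.ofFn_succ', List.concat_eq_append]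
    rfl

lemma chain'_ofFn {n : ℕ} (f : ℕ → P) (hf : ∀ i, i + 1 < n → f (i + 1) ≤ f i) :
    (List.ofFn fun i : Fin n => f i).Chain' (fun a b => b ≤ a) := by
  rw [List.Chain', List.isChain_iff_getElem]
  intro i h
  rw [List.length_ofFn] at h
  simp only [List.getElem_ofFn]
  exact hf i (by omega)

lemma auxStep_even (k : ℕ) :
    auxStep σ τ D hD (auxHist σ τ D hD (2 * k)) =
      (τ (List.ofFn fun i : Fin (2 * k) => auxS σ τ D hD i),
       τ (List.ofFn fun i : Fin (2 * k) => auxS σ τ D hD i)) := by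
  rw [auxHist_eq]
  unfold auxStep
  rw [if_pos (by simp [Nat.mul_mod_right])]
  rw [List.map_ofFn]
  rfl

lemma auxStep_odd (k : ℕ) :
    auxStep σ τ D hD (auxHist σ τ D hD (2 * k + 1)) =
      (σ (List.ofFn fun i : Fin (2 * k) => auxR σ τ D hD i) (auxR σ τ D hD (2 * k)),
       (hD k (σ (List.ofFn fun i : Fin (2 * k) => auxR σ τ D hD i)
          (auxR σ τ D hD (2 * k)))).choose) := by
  have h : auxHist σ τ D hD (2 * k + 1)
      = (List.ofFn fun i : Fin (2 * k) => (auxR σ τ D hD i, auxS σ τ D hD i))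
        ++ [(auxR σ τ D hD (2 * k), auxS σ τ D hD (2 * k))] := by
    rw [auxHist_eq, List.ofFn_succ', List.concat_eq_append]
    rfl
  rw [h]
  unfold auxStep
  rw [if_neg (by simp [Nat.mul_mod_right])]
  simp only [List.map_append, List.map_ofFn, List.map_cons, List.map_nil,
    List.dropLast_concat, List.getLastD_concat,
    List.length_append, List.length_ofFn, List.length_map, List.length_cons, List.length_nil]
  have hch : ∀ i j, i = j → ∀ a : P, (hD i a).choose = (hD j a).choose := by
    rintro i j rfl a; rfl
  exact congrArg₂ Prod.mk rfl (hch _ k (by omega) _)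

lemma auxR_even (k : ℕ) : auxR σ τ D hD (2 * k)
    = τ (List.ofFn fun i : Fin (2 * k) => auxS σ τ D hD i) := by
  show (auxStep σ τ D hD (auxHist σ τ D hD (2 * k))).1 = _
  rw [auxStep_even]

lemma auxS_even (k : ℕ) : auxS σ τ D hD (2 * k)
    = τ (List.ofFn fun i : Fin (2 * k) => auxS σ τ D hD i) := by
  show (auxStep σ τ D hD (auxHist σ τ D hD (2 * k))).2 = _
  rw [auxStep_even]

lemma auxR_odd (k : ℕ) : auxR σ τ D hD (2 * k + 1)
    = σ (List.ofFn fun i : Fin (2 * k) => auxR σ τ D hD i) (auxR σ τ D hD (2 * k)) := by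
  show (auxStep σ τ D hD (auxHist σ τ D hD (2 * k + 1))).1 = _
  rw [auxStep_odd]

lemma auxS_odd (k : ℕ) : auxS σ τ D hD (2 * k + 1)
    = (hD k (auxR σ τ D hD (2 * k + 1))).choose := by
  show (auxStep σ τ D hD (auxHist σ τ D hD (2 * k + 1))).2 = _
  rw [auxStep_odd, auxR_odd]

lemma auxS_odd_mem (k : ℕ) : auxS σ τ D hD (2 * k + 1) ∈ D k := by
  rw [auxS_odd]; exact (hD _ _).choose_spec.1

lemma auxS_odd_le (k : ℕ) : auxS σ τ D hD (2 * k + 1) ≤ auxR σ τ D hD (2 * k + 1) := by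
  rw [auxS_odd]; exact (hD _ _).choose_spec.2

lemma auxKey (hσ : IsAdamStrategy σ) (hτ : IsEveStrategy τ) (n : ℕ) :
    auxS σ τ D hD n ≤ auxR σ τ D hD n ∧
      ∀ m < n, auxS σ τ D hD n ≤ auxS σ τ D hD m ∧ auxR σ τ D hD n ≤ auxR σ τ D hD m := by
  induction n using Nat.strong_induction_on with
  | _ n ih =>
  rcases Nat.even_or_odd n with ⟨k, hk⟩ | ⟨k, hk⟩
  · -- n = 2 * k
    replace hk : n = 2 * k := by omega
    subst hk
    have hchain : (List.ofFn fun i : Fin (2 * k) => auxS σ τ D hD i).Chain'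
        (fun a b => b ≤ a) := by
      apply chain'_ofFn
      intro i hi
      exact ((ih (i + 1) (by omega)).2 i (by omega)).1
    have hτ' := hτ _ hchain (by simp [Nat.mul_mod_right])
    have hle : ∀ m < 2 * k, auxS σ τ D hD (2 * k) ≤ auxS σ τ D hD m := by
      intro m hm
      rw [auxS_even]
      exact hτ' _ (List.mem_ofFn.2 ⟨⟨m, hm⟩, rfl⟩)
    refine ⟨le_of_eq (by rw [auxS_even, auxR_even]), fun m hm => ⟨hle m hm, ?_⟩⟩
    calc auxR σ τ D hD (2 * k) = auxS σ τ D hD (2 * k) := by rw [auxS_even, auxR_even]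
      _ ≤ auxS σ τ D hD m := hle m hm
      _ ≤ auxR σ τ D hD m := (ih m hm).1
  · -- n = 2 * k + 1
    subst hk
    have hchain : ((List.ofFn fun i : Fin (2 * k) => auxR σ τ D hD i)
        ++ [auxR σ τ D hD (2 * k)]).Chain' (fun a b => b ≤ a) := by
      have : (List.ofFn fun i : Fin (2 * k) => auxR σ τ D hD i) ++ [auxR σ τ D hD (2 * k)]
          = List.ofFn fun i : Fin (2 * k + 1) => auxR σ τ D hD i := by
        rw [List.ofFn_succ', List.concat_eq_append]; rfl
      rw [this]
      apply chain'_ofFn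
      intro i hi
      exact ((ih (i + 1) (by omega)).2 i (by omega)).2
    have hσ' := hσ _ _ hchain (by simp [Nat.mul_mod_right])
    have hrr : ∀ m ≤ 2 * k, auxR σ τ D hD (2 * k + 1) ≤ auxR σ τ D hD m := by
      intro m hm
      rcases eq_or_lt_of_le hm with rfl | hm'
      · rw [auxR_odd]; exact hσ'.1
      · rw [auxR_odd]; exact hσ'.2 _ (List.mem_ofFn.2 ⟨⟨m, hm'⟩, rfl⟩)
    have hsr := auxS_odd_le σ τ D hD k
    refine ⟨hsr, fun m hm => ?_⟩
    have hm' : m ≤ 2 * k := by omega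
    have h1 : auxR σ τ D hD (2 * k + 1) ≤ auxR σ τ D hD m := hrr m hm'
    refine ⟨?_, h1⟩
    rcases Nat.even_or_odd m with ⟨j, hj⟩ | ⟨j, hj⟩
    · replace hj : m = 2 * j := by omega
      subst hj
      calc auxS σ τ D hD (2 * k + 1) ≤ auxR σ τ D hD (2 * k + 1) := hsr
        _ ≤ auxR σ τ D hD (2 * j) := hrr _ (by omega)
        _ = auxS σ τ D hD (2 * j) := by rw [auxS_even, auxR_even]
    · subst hj
      have hj1 : 2 * j + 2 ≤ 2 * k := by omega
      calc auxS σ τ D hD (2 * k + 1) ≤ auxR σ τ D hD (2 * k + 1) := hsr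
        _ ≤ auxR σ τ D hD (2 * (j + 1)) := hrr _ (by omega)
        _ = auxS σ τ D hD (2 * (j + 1)) := by rw [auxS_even, auxR_even]
        _ ≤ auxS σ τ D hD (2 * j + 1) := ((ih (2 * (j+1)) (by omega)).2 (2 * j + 1) (by omega)).1

lemma auxRS (hσ : IsAdamStrategy σ) (hτ : IsEveStrategy τ) (i : ℕ) :
    auxR σ τ D hD (i + 1) ≤ auxS σ τ D hD i := by
  rcases Nat.even_or_odd i with ⟨k, hk⟩ | ⟨k, hk⟩
  · replace hk : i = 2 * k := by omega
    subst hk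
    calc auxR σ τ D hD (2 * k + 1) ≤ auxR σ τ D hD (2 * k) :=
        ((auxKey σ τ D hD hσ hτ (2 * k + 1)).2 (2 * k) (by omega)).2
      _ = auxS σ τ D hD (2 * k) := by rw [auxS_even, auxR_even]
  · subst hk
    have h2 : 2 * k + 1 + 1 = 2 * (k + 1) := by ring
    rw [h2]
    calc auxR σ τ D hD (2 * (k + 1))
        = auxS σ τ D hD (2 * (k + 1)) := by rw [auxS_even, auxR_even]
      _ ≤ auxS σ τ D hD (2 * k + 1) :=
        ((auxKey σ τ D hD hσ hτ (2 * (k + 1))).2 (2 * k + 1) (by omega)).1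

end Aux


/-- if Eve has a winning strategy in `G(Y)` and `(D n)` are dense subsets
of `P`, then `Y ∩ Z ∉ I_P`, where `Z` is the set of all valuations `val g` of filters
`g` generated by descending ω-chains in `P` which evaluate the name `B` and meet
every `D n`. -/
theorem stmt_6 {P : Type*} [Preorder P]
    (B : ℕ → ℕ → Set P) (hB : CodedName B)
    (Y : Set BaireR) (D : ℕ → Set P)
    (hD : ∀ n, ∀ p : P, ∃ d ∈ D n, d ≤ p)
    (hEve : EveHasWinning B Y) :
    ¬ AdamHasWinning B (Y ∩ {x : BaireR | ∃ p : ℕ → P, Antitone p ∧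
      (∀ n, (genFilter p ∩ B n (x n)).Nonempty) ∧
      (∀ n, (genFilter p ∩ D n).Nonempty)}) := by
  rintro ⟨σ, hσ, hA⟩
  obtain ⟨τ, hτ, hT⟩ := hEve
  have key := auxKey σ τ D hD hσ hτ
  have hranti : Antitone (auxR σ τ D hD) :=
    antitone_nat_of_succ_le fun n => ((key (n + 1)).2 n (lt_add_one n)).2
  have hsanti : Antitone (auxS σ τ D hD) :=
    antitone_nat_of_succ_le fun n => ((key (n + 1)).2 n (lt_add_one n)).1
  have hFA : FollowsAdam σ (auxR σ τ D hD) := fun k => auxR_odd σ τ D hD k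
  have hFE : FollowsEve τ (auxS σ τ D hD) := fun k => auxS_even σ τ D hD k
  obtain ⟨x, hx1, hx2⟩ := hT (auxS σ τ D hD) hsanti hFE
  apply hA (auxR σ τ D hD) hranti hFA
  refine ⟨x, ?_, hx2, auxS σ τ D hD, hsanti, hx1, ?_⟩
  · intro n
    obtain ⟨p, hp1, hp2⟩ := hx1 n
    obtain ⟨i, hi⟩ := hp1
    exact ⟨p, ⟨i + 1, le_trans (auxRS σ τ D hD hσ hτ i) hi⟩, hp2⟩
  · intro n
    exact ⟨auxS σ τ D hD (2 * n + 1), ⟨2 * n + 1, le_refl _⟩, auxS_odd_mem σ τ D hD n⟩
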